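/- If a basis 𝓑 of a Banach space X is C_ℓ-suppression quasi-greedy and Δ_{𝐧,pl}-(𝐧, PSLC), then 𝓑 is (𝐧, strong partially greedy) with constant C_{𝐧,sp} ≤ C_ℓ·Δ_{𝐧,pl}. -/

import Mathlib

open scoped BigOperators ENNReal NNReal

/-- The collection `𝕋(𝐧)`: pairs of finite sets `(A, D)` with `A ⊆ 𝐧`, `|A| ≤ |D|`
and `A < D ∩ 𝐧`. -/
def TPair (seq : ℕ → ℕ) (A D : Finset ℕ) : Prop :=
  (↑A : Set ℕ) ⊆ Set.range seq ∧ A.card ≤ D.card ∧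
    ∀ a ∈ A, ∀ d ∈ D, d ∈ Set.range seq → a < d

/-- The collection `𝕊(𝐧)`: pairs of finite sets `(A, D)` with `A ⊆ 𝐧` and `|A| ≤ |D|`. -/
def SPair (seq : ℕ → ℕ) (A D : Finset ℕ) : Prop :=
  (↑A : Set ℕ) ⊆ Set.range seq ∧ A.card ≤ D.card

/-- The interval `{n_{k+1}, …, n_{k+m}}` of `m` consecutive terms of the sequence `seq`
(0-indexed: `seq k, …, seq (k+m-1)`). -/
def intervalSet (seq : ℕ → ℕ) (k m : ℕ) : Finset ℕ :=
  (Finset.range m).image fun i => seq (k + i)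

/-- The (1-based) index `ι(max A)` of the largest element of `A` in the sequence `seq`
(`0` if `A` is empty). -/
noncomputable def iotaMax (seq : ℕ → ℕ) (A : Finset ℕ) : ℕ :=
  if h : A.Nonempty then sInf {i | seq i = A.max' h} + 1 else 0

/-- The collection `𝕋^ω(𝐧)`: pairs of finite sets `(A, D)` with `A ⊆ 𝐧`, `ω(A) ≤ ω(D)`
and `A < D ∩ 𝐧`. -/
def WTPair (w : Set ℕ → ℝ≥0∞) (seq : ℕ → ℕ) (A D : Finset ℕ) : Prop :=
  (↑A : Set ℕ) ⊆ Set.range seq ∧ w (↑A : Set ℕ) ≤ w (↑D : Set ℕ) ∧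
    ∀ a ∈ A, ∀ d ∈ D, d ∈ Set.range seq → a < d

/-- A (semi-normalized) basis `(e_n)` of a Banach space `X`, together with its biorthogonal
functionals `(e_n^*)`: the span of the `e_n` is norm-dense, `e_j^*(e_k) = δ_{jk}`, and the
norms of the `e_n` and `e_n^*` are bounded above and away from zero. -/
structure BasisOf (𝕜 : Type*) (X : Type*) [RCLike 𝕜] [NormedAddCommGroup X]
    [NormedSpace 𝕜 X] where
  e : ℕ → X
  coord : ℕ → X →L[𝕜] 𝕜
  dense_span : Dense (↑(Submodule.span 𝕜 (Set.range e)) : Set X)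
  biorth : ∀ j k : ℕ, coord j (e k) = if j = k then (1 : 𝕜) else 0
  norm_bounds : ∃ c₁ c₂ : ℝ, 0 < c₁ ∧ (∀ n, c₁ ≤ ‖e n‖ ∧ c₁ ≤ ‖coord n‖) ∧
    ∀ n, ‖e n‖ ≤ c₂ ∧ ‖coord n‖ ≤ c₂

namespace BasisOf

variable {𝕜 : Type*} {X : Type*} [RCLike 𝕜] [NormedAddCommGroup X] [NormedSpace 𝕜 X]
variable (B : BasisOf 𝕜 X)

/-- The projection `P_A(x) = ∑_{n ∈ A} e_n^*(x) e_n`. -/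
noncomputable def proj (A : Finset ℕ) (x : X) : X := ∑ n ∈ A, B.coord n x • B.e n

/-- `1_{εA} = ∑_{n ∈ A} ε_n e_n`. -/
noncomputable def sgnSum (ε : ℕ → 𝕜) (A : Finset ℕ) : X := ∑ n ∈ A, ε n • B.e n

/-- `1_A = ∑_{n ∈ A} e_n`. -/
noncomputable def ones (A : Finset ℕ) : X := ∑ n ∈ A, B.e n

/-- `P^𝐧_m(x) = ∑_{i=1}^m e_{n_i}^*(x) e_{n_i}`, the projection on the first `m` terms of the
subsequence given by `seq`. -/
noncomputable def projSeq (seq : ℕ → ℕ) (m : ℕ) (x : X) : X :=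
  ∑ i ∈ Finset.range m, B.coord (seq i) x • B.e (seq i)

/-- `A` is a greedy set of `x`: the coefficients inside `A` dominate those outside. -/
def IsGreedySet (x : X) (A : Finset ℕ) : Prop :=
  ∀ a ∈ A, ∀ b ∉ A, ‖B.coord b x‖ ≤ ‖B.coord a x‖

/-- The support `{n : e_n^*(x) ≠ 0}`. -/
def supp (x : X) : Set ℕ := {n | B.coord n x ≠ 0}

/-- `𝓑` is `C`-(`𝐧`, strong partially greedy):
`‖x - G_m(x)‖ ≤ C ⋅ σ̂^𝐧_m(x)` for all `x`, all `m ≥ 1` and all greedy sums. -/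
def SPGWith (seq : ℕ → ℕ) (C : ℝ) : Prop :=
  ∀ x : X, ∀ m : ℕ, 1 ≤ m → ∀ A : Finset ℕ, A.card = m → B.IsGreedySet x A →
    ∀ k : ℕ, k ≤ m → ‖x - B.proj A x‖ ≤ C * ‖x - B.projSeq seq k x‖

/-- `𝓑` is (`𝐧`, strong partially greedy). -/
def SPG (seq : ℕ → ℕ) : Prop := ∃ C : ℝ, 1 ≤ C ∧ B.SPGWith seq C

/-- `𝓑` is quasi-greedy with constant `C`. -/
def QuasiGreedyWith (C : ℝ) : Prop :=
  ∀ x : X, ∀ A : Finset ℕ, A.Nonempty → B.IsGreedySet x A → ‖B.proj A x‖ ≤ C * ‖x‖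

/-- `𝓑` is quasi-greedy. -/
def QuasiGreedy : Prop := ∃ C : ℝ, B.QuasiGreedyWith C

/-- `𝓑` is suppression quasi-greedy with constant `C`. -/
def SuppQGWith (C : ℝ) : Prop :=
  ∀ x : X, ∀ A : Finset ℕ, A.Nonempty → B.IsGreedySet x A → ‖x - B.proj A x‖ ≤ C * ‖x‖

/-- `𝓑` is `C`-(`𝐧`, PSLC). -/
def PSLCWith (seq : ℕ → ℕ) (C : ℝ) : Prop :=
  ∀ x : X, (∀ n, ‖B.coord n x‖ ≤ 1) → ∀ A D : Finset ℕ, TPair seq A D →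
    (∀ d ∈ D, B.coord d x = 0) →
    (∀ a ∈ A, ∀ j : ℕ, (j ∈ D ∨ B.coord j x ≠ 0) → j ∈ Set.range seq → a < j) →
    ∀ ε δ : ℕ → 𝕜, (∀ n, ‖ε n‖ = 1) → (∀ n, ‖δ n‖ = 1) →
      ‖x + B.sgnSum ε A‖ ≤ C * ‖x + B.sgnSum δ D‖

/-- `𝓑` is (`𝐧`, PSLC). -/
def PSLC (seq : ℕ → ℕ) : Prop := ∃ C : ℝ, 1 ≤ C ∧ B.PSLCWith seq C

/-- `𝓑` is (`𝐧`, superconservative) with constant `C`. -/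
def SuperconservativeWith (seq : ℕ → ℕ) (C : ℝ) : Prop :=
  ∀ A D : Finset ℕ, TPair seq A D →
    ∀ ε δ : ℕ → 𝕜, (∀ n, ‖ε n‖ = 1) → (∀ n, ‖δ n‖ = 1) →
      ‖B.sgnSum ε A‖ ≤ C * ‖B.sgnSum δ D‖

/-- `𝓑` is (`𝐧`, superconservative). -/
def Superconservative (seq : ℕ → ℕ) : Prop :=
  ∃ C : ℝ, 0 < C ∧ B.SuperconservativeWith seq C

/-- `𝓑` is (`𝐧`, conservative) with constant `C`. -/
def ConservativeWith (seq : ℕ → ℕ) (C : ℝ) : Prop :=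
  ∀ A D : Finset ℕ, TPair seq A D → ‖B.ones A‖ ≤ C * ‖B.ones D‖

/-- `𝓑` is (`𝐧`, conservative). -/
def Conservative (seq : ℕ → ℕ) : Prop := ∃ C : ℝ, 0 < C ∧ B.ConservativeWith seq C

/-- `𝓑` is (`𝐧`, democratic) with constant `C`. -/
def DemocraticWith (seq : ℕ → ℕ) (C : ℝ) : Prop :=
  ∀ A D : Finset ℕ, SPair seq A D → ‖B.ones A‖ ≤ C * ‖B.ones D‖

/-- `𝓑` is (`𝐧`, democratic). -/
def Democratic (seq : ℕ → ℕ) : Prop := ∃ C : ℝ, B.DemocraticWith seq C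

/-- `𝓑` is (`𝐧`, almost greedy) with constant `C`:
`‖x - G_m(x)‖ ≤ C σ̃^𝐧_m(x)` where `σ̃^𝐧_m(x) = inf {‖x - P_D(x)‖ : D ⊆ 𝐧, |D| = m}`. -/
def AlmostGreedyWith (seq : ℕ → ℕ) (C : ℝ) : Prop :=
  ∀ x : X, ∀ m : ℕ, 1 ≤ m → ∀ A : Finset ℕ, A.card = m → B.IsGreedySet x A →
    ∀ D : Finset ℕ, (↑D : Set ℕ) ⊆ Set.range seq → D.card = m →
      ‖x - B.proj A x‖ ≤ C * ‖x - B.proj D x‖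

/-- `𝓑` is (`𝐧`, almost greedy). -/
def AlmostGreedy (seq : ℕ → ℕ) : Prop := ∃ C : ℝ, 1 ≤ C ∧ B.AlmostGreedyWith seq C

/-- `𝓑` is 1-unconditional. -/
def OneUnconditional : Prop :=
  ∀ (F : Finset ℕ) (a b : ℕ → 𝕜), (∀ n, ‖a n‖ ≤ ‖b n‖) →
    ‖∑ n ∈ F, a n • B.e n‖ ≤ ‖∑ n ∈ F, b n • B.e n‖

/-- `𝓑` is `C`-(`𝐧`, consecutive almost greedy) of type I. -/
def CAGIWith (seq : ℕ → ℕ) (C : ℝ) : Prop :=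
  ∀ x : X, ∀ m : ℕ, 1 ≤ m → ∀ A : Finset ℕ, A.card = m → B.IsGreedySet x A →
    ∀ k : ℕ, ‖x - B.proj A x‖ ≤ C * ‖x - B.proj (intervalSet seq k m) x‖

/-- `𝓑` is `C`-(`𝐧`, consecutive almost greedy) of type II. -/
def CAGIIWith (seq : ℕ → ℕ) (C : ℝ) : Prop :=
  ∀ x : X, ∀ m : ℕ, 1 ≤ m → ∀ A : Finset ℕ, A.card = m → B.IsGreedySet x A →
    ∀ k p : ℕ, ((↑(intervalSet seq k p) : Set ℕ) ∩ B.supp x).ncard ≤ m →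
      ‖x - B.proj A x‖ ≤ C * ‖x - B.proj (intervalSet seq k p) x‖

/-- `𝓑` is `C`-(`𝐧`, RSLC). -/
def RSLCWith (seq : ℕ → ℕ) (C : ℝ) : Prop :=
  ∀ x : X, (∀ n, ‖B.coord n x‖ ≤ 1) → ∀ A D : Finset ℕ, SPair seq A D →
    (∀ d ∈ D, B.coord d x = 0) →
    (∀ j : ℕ, (j ∈ D ∨ B.coord j x ≠ 0) → j ∈ Set.range seq →
      (∀ a ∈ A, j < a) ∨ (∀ a ∈ A, a < j)) →
    ∀ ε δ : ℕ → 𝕜, (∀ n, ‖ε n‖ = 1) → (∀ n, ‖δ n‖ = 1) →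
      ‖x + B.sgnSum ε A‖ ≤ C * ‖x + B.sgnSum δ D‖

/-- `𝓑` is `C`-(`𝐧`, SLC). -/
def SLCWith (seq : ℕ → ℕ) (C : ℝ) : Prop :=
  ∀ x : X, (∀ n, ‖B.coord n x‖ ≤ 1) → ∀ A D : Finset ℕ, SPair seq A D →
    Disjoint A D → (∀ a ∈ A, B.coord a x = 0) → (∀ d ∈ D, B.coord d x = 0) →
    ∀ ε δ : ℕ → 𝕜, (∀ n, ‖ε n‖ = 1) → (∀ n, ‖δ n‖ = 1) →
      ‖x + B.sgnSum ε A‖ ≤ C * ‖x + B.sgnSum δ D‖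

/-- The Lebesgue-type parameter `L̂^𝐧_m`: the least constant `C ∈ [0,∞]` with
`‖x - G_m(x)‖ ≤ C σ̂^𝐧_m(x)` for all `x` and all greedy sums `G_m(x)`. -/
noncomputable def Lhat (seq : ℕ → ℕ) (m : ℕ) : ℝ≥0∞ :=
  sInf {C : ℝ≥0∞ | ∀ (x : X) (A : Finset ℕ), A.card = m → B.IsGreedySet x A →
    ∀ k : ℕ, k ≤ m →
      (‖x - B.proj A x‖₊ : ℝ≥0∞) ≤ C * (‖x - B.projSeq seq k x‖₊ : ℝ≥0∞)}

/-- The parameter `g_m^c`. -/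
noncomputable def gc (m : ℕ) : ℝ≥0∞ :=
  ⨆ (x : X) (_ : x ≠ 0) (A : Finset ℕ) (_ : A.card ≤ m) (_ : B.IsGreedySet x A),
    (‖x - B.proj A x‖₊ : ℝ≥0∞) / (‖x‖₊ : ℝ≥0∞)

/-- The parameter `g̃_m`. -/
noncomputable def gtilde (m : ℕ) : ℝ≥0∞ :=
  ⨆ (x : X) (_ : x ≠ 0) (A : Finset ℕ) (A' : Finset ℕ) (_ : A ⊆ A') (_ : A.card < A'.card)
    (_ : A'.card ≤ m) (_ : B.IsGreedySet x A) (_ : B.IsGreedySet x A'),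
    (‖B.proj A' x - B.proj A x‖₊ : ℝ≥0∞) / (‖x‖₊ : ℝ≥0∞)

/-- The parameter `sc^𝐧_m`. -/
noncomputable def scParam (seq : ℕ → ℕ) (m : ℕ) : ℝ≥0∞ :=
  ⨆ (A : Finset ℕ) (D : Finset ℕ) (_ : TPair seq A D) (_ : D.card ≤ m)
    (_ : ∀ a ∈ A, a ≤ seq (m - 1)) (ε : ℕ → 𝕜) (_ : ∀ n, ‖ε n‖ = 1)
    (δ : ℕ → 𝕜) (_ : ∀ n, ‖δ n‖ = 1),
    (‖B.sgnSum ε A‖₊ : ℝ≥0∞) / (‖B.sgnSum δ D‖₊ : ℝ≥0∞)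

/-- The parameter `ω^𝐧_m`. -/
noncomputable def omegaParam (seq : ℕ → ℕ) (m : ℕ) : ℝ≥0∞ :=
  ⨆ (x : X) (_ : ∀ n, ‖B.coord n x‖ ≤ 1) (A : Finset ℕ) (D : Finset ℕ)
    (_ : (↑A : Set ℕ) ⊆ Set.range seq) (_ : A.card ≤ D.card) (_ : D.card ≤ m)
    (_ : ∀ a ∈ A, a ≤ seq (m - 1)) (_ : ∀ d ∈ D, B.coord d x = 0)
    (_ : ∀ a ∈ A, ∀ j : ℕ, (j ∈ D ∨ B.coord j x ≠ 0) → j ∈ Set.range seq → a < j)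
    (ε : ℕ → 𝕜) (_ : ∀ n, ‖ε n‖ = 1) (δ : ℕ → 𝕜) (_ : ∀ n, ‖δ n‖ = 1),
    (‖x + B.sgnSum ε A‖₊ : ℝ≥0∞) / (‖x + B.sgnSum δ D‖₊ : ℝ≥0∞)

/-- The parameter `ω̂^𝐧_m`. -/
noncomputable def omegaHatParam (seq : ℕ → ℕ) (m : ℕ) : ℝ≥0∞ :=
  ⨆ (x : X) (_ : ∀ n, ‖B.coord n x‖ ≤ 1) (A : Finset ℕ) (D : Finset ℕ)
    (_ : (↑A : Set ℕ) ⊆ Set.range seq) (_ : A.card ≤ D.card) (_ : D.card ≤ m)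
    (_ : ∀ a ∈ A, a ≤ seq (m - 1))
    (_ : ∀ d ∈ D, B.coord d (x - B.proj A x) = 0)
    (_ : ∀ a ∈ A, ∀ j : ℕ, (j ∈ D ∨ B.coord j (x - B.proj A x) ≠ 0) →
      j ∈ Set.range seq → a < j)
    (ε : ℕ → 𝕜) (_ : ∀ n, ‖ε n‖ = 1),
    (‖x‖₊ : ℝ≥0∞) / (‖x - B.proj A x + B.sgnSum ε D‖₊ : ℝ≥0∞)

/-- `κ = sup_{j,k} ‖e_j‖ ‖e_k^*‖`. -/
noncomputable def kappa : ℝ≥0∞ :=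
  ⨆ (j : ℕ) (k : ℕ), ((‖B.e j‖₊ * ‖B.coord k‖₊ : ℝ≥0) : ℝ≥0∞)

/-- `𝓑` is `𝐬`-(`𝐧`, strong partially greedy) with constant `C`:
the strong partially greedy inequality for all orders `m` in the sequence `s`. -/
def SPGOnWith (seq : ℕ → ℕ) (s : ℕ → ℕ) (C : ℝ) : Prop :=
  ∀ x : X, ∀ i : ℕ, ∀ A : Finset ℕ, A.card = s i → B.IsGreedySet x A →
    ∀ k : ℕ, k ≤ s i → ‖x - B.proj A x‖ ≤ C * ‖x - B.projSeq seq k x‖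

/-- `𝓑` is (`λ`, `𝐧`, strong partially greedy). -/
def LamSPG (seq : ℕ → ℕ) (lam : ℝ) : Prop :=
  ∃ C : ℝ, 1 ≤ C ∧ ∀ x : X, ∀ m : ℕ, 1 ≤ m →
    ∀ A : Finset ℕ, A.card = ⌈lam * (m : ℝ)⌉₊ → B.IsGreedySet x A →
      ∀ k : ℕ, k ≤ m → ‖x - B.proj A x‖ ≤ C * ‖x - B.projSeq seq k x‖

/-- `𝓑` is (`λ`, `𝐧`, PSLC). -/
def LamPSLC (seq : ℕ → ℕ) (lam : ℝ) : Prop :=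
  ∃ C : ℝ, 1 ≤ C ∧ ∀ x : X, (∀ n, ‖B.coord n x‖ ≤ 1) →
    ∀ A D : Finset ℕ, (↑A : Set ℕ) ⊆ Set.range seq → A.card ≤ D.card →
      (lam - 1) * (iotaMax seq A : ℝ) + A.card ≤ D.card →
      (∀ d ∈ D, B.coord d x = 0) →
      (∀ a ∈ A, ∀ j : ℕ, (j ∈ D ∨ B.coord j x ≠ 0) → j ∈ Set.range seq → a < j) →
      ∀ ε δ : ℕ → 𝕜, (∀ n, ‖ε n‖ = 1) → (∀ n, ‖δ n‖ = 1) →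
        ‖x + B.sgnSum ε A‖ ≤ C * ‖x + B.sgnSum δ D‖

/-- `𝓑` is (`λ`, `𝐧`, superconservative). -/
def LamSuperconservative (seq : ℕ → ℕ) (lam : ℝ) : Prop :=
  ∃ C : ℝ, 0 < C ∧ ∀ A D : Finset ℕ, TPair seq A D →
    (lam - 1) * (iotaMax seq A : ℝ) + A.card ≤ D.card →
    ∀ ε δ : ℕ → 𝕜, (∀ n, ‖ε n‖ = 1) → (∀ n, ‖δ n‖ = 1) →
      ‖B.sgnSum ε A‖ ≤ C * ‖B.sgnSum δ D‖

/-- `𝓑` is (`λ`, `𝐧`, conservative). -/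
def LamConservative (seq : ℕ → ℕ) (lam : ℝ) : Prop :=
  ∃ C : ℝ, 0 < C ∧ ∀ A D : Finset ℕ, TPair seq A D →
    (lam - 1) * (iotaMax seq A : ℝ) + A.card ≤ D.card →
    ‖B.ones A‖ ≤ C * ‖B.ones D‖

/-- `𝓑` is `ω`-(`𝐧`, strong partially greedy) for the weight on sets `w`. -/
def WSPG (seq : ℕ → ℕ) (w : Set ℕ → ℝ≥0∞) : Prop :=
  ∃ C : ℝ, 1 ≤ C ∧ ∀ x : X, ∀ m : ℕ, 1 ≤ m → ∀ A : Finset ℕ, A.card = m →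
    B.IsGreedySet x A → ∀ m' : ℕ,
      w (↑((Finset.range m').image seq \ A) : Set ℕ) ≤
        w (↑(A \ (Finset.range m').image seq) : Set ℕ) →
      ‖x - B.proj A x‖ ≤ C * ‖x - B.proj ((Finset.range m').image seq) x‖

/-- `𝓑` is `ω`-(`𝐧`, PSLC). -/
def WPSLC (seq : ℕ → ℕ) (w : Set ℕ → ℝ≥0∞) : Prop :=
  ∃ C : ℝ, 1 ≤ C ∧ ∀ x : X, (∀ n, ‖B.coord n x‖ ≤ 1) →
    ∀ A D : Finset ℕ, WTPair w seq A D →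
      (∀ d ∈ D, B.coord d x = 0) →
      (∀ a ∈ A, ∀ j : ℕ, (j ∈ D ∨ B.coord j x ≠ 0) → j ∈ Set.range seq → a < j) →
      ∀ ε δ : ℕ → 𝕜, (∀ n, ‖ε n‖ = 1) → (∀ n, ‖δ n‖ = 1) →
        ‖x + B.sgnSum ε A‖ ≤ C * ‖x + B.sgnSum δ D‖

/-- `𝓑` is `ω`-(`𝐧`, superconservative). -/
def WSuperconservative (seq : ℕ → ℕ) (w : Set ℕ → ℝ≥0∞) : Prop :=
  ∃ C : ℝ, 0 < C ∧ ∀ A D : Finset ℕ, WTPair w seq A D →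
    ∀ ε δ : ℕ → 𝕜, (∀ n, ‖ε n‖ = 1) → (∀ n, ‖δ n‖ = 1) →
      ‖B.sgnSum ε A‖ ≤ C * ‖B.sgnSum δ D‖

/-- `𝓑` is `ω`-(`𝐧`, conservative). -/
def WConservative (seq : ℕ → ℕ) (w : Set ℕ → ℝ≥0∞) : Prop :=
  ∃ C : ℝ, 0 < C ∧ ∀ A D : Finset ℕ, WTPair w seq A D → ‖B.ones A‖ ≤ C * ‖B.ones D‖

end BasisOf

/-- A Banach space over `𝕜` equipped with a basis. -/
structure BanachWithBasis (𝕜 : Type*) [RCLike 𝕜] where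
  carrier : Type
  [grp : NormedAddCommGroup carrier]
  [mod : NormedSpace 𝕜 carrier]
  [comp : CompleteSpace carrier]
  basis : BasisOf 𝕜 carrier

attribute [instance] BanachWithBasis.grp BanachWithBasis.mod BanachWithBasis.comp

section AuxSPG

variable {𝕜 X : Type*} [RCLike 𝕜] [NormedAddCommGroup X] [NormedSpace 𝕜 X]

namespace BasisOf

lemma coord_e' (B : BasisOf 𝕜 X) (n j : ℕ) :
    B.coord n (B.e j) = if j = n then 1 else 0 := by
  rw [B.biorth n j]
  rcases eq_or_ne n j with rfl | h
  · simp
  · rw [if_neg h, if_neg (Ne.symm h)]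

lemma coord_proj (B : BasisOf 𝕜 X) (F : Finset ℕ) (x : X) (n : ℕ) :
    B.coord n (B.proj F x) = if n ∈ F then B.coord n x else 0 := by
  classical
  unfold proj
  rw [map_sum]
  have h : ∀ j ∈ F, B.coord n (B.coord j x • B.e j)
      = if j = n then B.coord n x else 0 := by
    intro j _
    rw [map_smul, smul_eq_mul, B.coord_e' n j]
    by_cases h : j = n
    · subst h; simp
    · simp [h]
  rw [Finset.sum_congr rfl h, Finset.sum_ite_eq' F n fun _ => B.coord n x]

lemma coord_ones (B : BasisOf 𝕜 X) (F : Finset ℕ) (n : ℕ) :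
    B.coord n (B.ones F) = if n ∈ F then 1 else 0 := by
  classical
  unfold ones
  rw [map_sum]
  rw [Finset.sum_congr rfl fun j _ => B.coord_e' n j, Finset.sum_ite_eq' F n fun _ => (1 : 𝕜)]

lemma e_ne_zero (B : BasisOf 𝕜 X) (n : ℕ) : B.e n ≠ 0 := by
  intro h
  have := B.coord_e' n n
  rw [h, map_zero, if_pos rfl] at this
  exact one_ne_zero this.symm

lemma norm_e_pos (B : BasisOf 𝕜 X) (n : ℕ) : 0 < ‖B.e n‖ :=
  norm_pos_iff.mpr (B.e_ne_zero n)

lemma pslc_one_le (B : BasisOf 𝕜 X) (seq : ℕ → ℕ) (Δ : ℝ) (h2 : B.PSLCWith seq Δ) :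
    1 ≤ Δ := by
  have h := h2 (B.e 0) ?_ ∅ ∅ ⟨by simp, le_refl _, by simp⟩ (by simp) (by simp)
      (fun _ => 1) (fun _ => 1) (fun _ => norm_one) (fun _ => norm_one)
  · simp only [sgnSum, Finset.sum_empty, add_zero] at h
    nlinarith [B.norm_e_pos 0]
  · intro n
    rw [B.coord_e' n 0]
    by_cases h : (0 : ℕ) = n <;> simp [h]

lemma suppqg_one_le (B : BasisOf 𝕜 X) (Cl : ℝ) (h1 : B.SuppQGWith Cl) : 1 ≤ Cl := by
  classical
  by_contra hlt
  push_neg at hlt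
  have hg0 : B.IsGreedySet (B.e 0) {0} := by
    intro a ha b hb
    rw [Finset.mem_singleton] at ha hb
    subst ha
    rw [B.coord_e' b 0, B.coord_e' 0 0]
    have : ¬ (0 : ℕ) = b := fun h => hb h.symm
    simp [this]
  have hCl0 : 0 ≤ Cl := by
    have h := h1 (B.e 0) {0} ⟨0, Finset.mem_singleton_self 0⟩ hg0
    nlinarith [norm_nonneg (B.e 0 - B.proj {0} (B.e 0)), B.norm_e_pos 0]
  obtain ⟨c₁, c₂, hc₁, hlow, hhigh⟩ := B.norm_bounds
  have hc₂ : 0 < c₂ := lt_of_lt_of_le hc₁ (le_trans (hlow 0).1 (hhigh 0).1)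
  -- step: removing the top element of `1_{range (N+2)}`
  have hstep : ∀ N : ℕ,
      ‖B.ones (Finset.range (N+1))‖ ≤ Cl * ‖B.ones (Finset.range (N+2))‖ := by
    intro N
    set x := B.ones (Finset.range (N+2)) with hx
    have hgr : B.IsGreedySet x {N+1} := by
      intro a ha b hb
      rw [Finset.mem_singleton] at ha
      subst ha
      rw [B.coord_ones, B.coord_ones,
        if_pos (show N+1 ∈ Finset.range (N+2) by simp)]
      by_cases h : b ∈ Finset.range (N+2) <;> simp [h]
    have h := h1 x {N+1} ⟨N+1, Finset.mem_singleton_self _⟩ hgr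
    have hproj : B.proj {N+1} x = B.e (N+1) := by
      unfold proj
      rw [Finset.sum_singleton, B.coord_ones, if_pos (by simp), one_smul]
    rw [hproj] at h
    have hxsub : x - B.e (N+1) = B.ones (Finset.range (N+1)) := by
      rw [hx]
      unfold ones
      rw [Finset.sum_range_succ]
      abel
    rwa [hxsub] at h
  have hiter : ∀ N : ℕ, ‖B.e 0‖ ≤ Cl ^ N * ‖B.ones (Finset.range (N+1))‖ := by
    intro N
    induction N with
    | zero => simp [ones, Finset.sum_range_one]
    | succ N ih =>
      calc ‖B.e 0‖ ≤ Cl ^ N * ‖B.ones (Finset.range (N+1))‖ := ih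
        _ ≤ Cl ^ N * (Cl * ‖B.ones (Finset.range (N+2))‖) :=
            mul_le_mul_of_nonneg_left (hstep N) (pow_nonneg hCl0 N)
        _ = Cl ^ (N+1) * ‖B.ones (Finset.range (N+1+1))‖ := by ring
  have hbound : ∀ F : Finset ℕ, ‖B.ones F‖ ≤ F.card * c₂ := by
    intro F
    calc ‖B.ones F‖ ≤ ∑ n ∈ F, ‖B.e n‖ := norm_sum_le _ _
      _ ≤ ∑ _n ∈ F, c₂ := Finset.sum_le_sum fun n _ => (hhigh n).1
      _ = F.card * c₂ := by rw [Finset.sum_const, nsmul_eq_mul]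
  rcases eq_or_lt_of_le hCl0 with hCl0' | hClpos
  · have h := hiter 1
    rw [← hCl0'] at h
    simp only [pow_one, zero_mul] at h
    linarith [B.norm_e_pos 0]
  · have hsum := (summable_pow_mul_geometric_of_norm_lt_one 1
      (r := Cl) (by rw [Real.norm_eq_abs, abs_of_nonneg hCl0]; exact hlt)).tendsto_atTop_zero
    have hev := (hsum.eventually (gt_mem_nhds (show (0:ℝ) < Cl * c₁ / c₂ by positivity))).and
      (Filter.eventually_ge_atTop 1)
    obtain ⟨n, hn, hn1⟩ := hev.exists
    obtain ⟨N, rfl⟩ : ∃ N, n = N + 1 := ⟨n - 1, by omega⟩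
    have h1' : ((N:ℝ)+1) * Cl ^ (N+1) < Cl * c₁ / c₂ := by
      have := hn
      push_cast at this ⊢
      nlinarith [this]
    have h2' : Cl ^ N * (((N:ℝ)+1) * c₂) < c₁ := by
      have e0 := mul_lt_mul_of_pos_right h1' hc₂
      rw [div_mul_cancel₀ _ (ne_of_gt hc₂)] at e0
      have e1 : Cl * (Cl ^ N * (((N:ℝ)+1) * c₂)) < Cl * c₁ := by
        calc Cl * (Cl ^ N * (((N:ℝ)+1) * c₂)) = ((N:ℝ)+1) * Cl ^ (N+1) * c₂ := by ring
          _ < Cl * c₁ := e0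
      exact (mul_lt_mul_iff_right₀ hClpos).mp e1
    have h3 : ‖B.e 0‖ ≤ Cl ^ N * (((N:ℝ)+1) * c₂) := by
      refine le_trans (hiter N) (mul_le_mul_of_nonneg_left ?_ (pow_nonneg hCl0 N))
      have := hbound (Finset.range (N+1))
      rwa [Finset.card_range, Nat.cast_add, Nat.cast_one] at this
    linarith [(hlow 0).1, h3, h2']

/-- One-coordinate convexity: a coefficient of modulus `≤ t` can be replaced by a
unimodular multiple of `t` without decreasing the norm, for a suitable sign. -/
lemma signChoice (c : 𝕜) (t : ℝ) (hct : ‖c‖ ≤ t) (w v : X) :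
    ∃ u : 𝕜, ‖u‖ = 1 ∧ ‖w + c • v‖ ≤ ‖w + ((t : 𝕜) * u) • v‖ := by
  classical
  by_cases ht : t = 0
  · refine ⟨1, norm_one, ?_⟩
    have hc0 : c = 0 := norm_le_zero_iff.mp (by rw [ht] at hct; exact hct)
    simp [hc0, ht]
  · have ht' : 0 < t := lt_of_le_of_ne (le_trans (norm_nonneg c) hct) (Ne.symm ht)
    set u₀ : 𝕜 := if c = 0 then 1 else (‖c‖ : 𝕜)⁻¹ * c with hu₀def
    have hu₀ : ‖u₀‖ = 1 := by
      rw [hu₀def]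
      split_ifs with hc
      · exact norm_one
      · rw [norm_mul, norm_inv, RCLike.norm_ofReal, abs_of_nonneg (norm_nonneg c)]
        exact inv_mul_cancel₀ (norm_ne_zero_iff.mpr hc)
    have hkey : c = (‖c‖ : 𝕜) * u₀ := by
      rw [hu₀def]
      split_ifs with hc
      · simp [hc]
      · rw [← mul_assoc, mul_inv_cancel₀ (by
          simpa [RCLike.ofReal_eq_zero] using norm_ne_zero_iff.mpr hc), one_mul]
    set θ : ℝ := (t + ‖c‖) / (2 * t) with hθdef
    have hθ0 : 0 ≤ θ := by positivity
    have hθ1 : θ ≤ 1 := by rw [hθdef, div_le_one (by positivity)]; linarith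
    have h2θ : (2 * θ - 1) * t = ‖c‖ := by rw [hθdef]; field_simp; ring
    have hdecomp : w + c • v
        = ((θ : ℝ) : 𝕜) • (w + ((t : 𝕜) * u₀) • v)
          + (((1 - θ : ℝ) : 𝕜)) • (w + ((t : 𝕜) * (-u₀)) • v) := by
      have hsc : ((θ : ℝ) : 𝕜) + ((1 - θ : ℝ) : 𝕜) = 1 := by push_cast; ring
      have hsc2 : ((θ : ℝ) : 𝕜) * ((t : 𝕜) * u₀) + ((1 - θ : ℝ) : 𝕜) * ((t : 𝕜) * (-u₀))
          = (‖c‖ : 𝕜) * u₀ := by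
        rw [← h2θ]; push_cast; ring
      rw [smul_add, smul_add, smul_smul, smul_smul]
      rw [add_add_add_comm, ← add_smul, ← add_smul, hsc, hsc2, one_smul, ← hkey]
    have hnorm : ‖w + c • v‖ ≤ θ * ‖w + ((t : 𝕜) * u₀) • v‖
        + (1 - θ) * ‖w + ((t : 𝕜) * (-u₀)) • v‖ := by
      rw [hdecomp]
      refine le_trans (norm_add_le _ _) ?_
      rw [norm_smul, norm_smul, RCLike.norm_ofReal, RCLike.norm_ofReal,
        abs_of_nonneg hθ0, abs_of_nonneg (by linarith)]
    rcases le_total ‖w + ((t : 𝕜) * (-u₀)) • v‖ ‖w + ((t : 𝕜) * u₀) • v‖ with hle | hle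
    · exact ⟨u₀, hu₀, by nlinarith⟩
    · exact ⟨-u₀, by rw [norm_neg]; exact hu₀, by nlinarith⟩

/-- Iterated convexity over a finite set of coordinates. -/
lemma convChoice (B : BasisOf 𝕜 X) (E : Finset ℕ) (c : ℕ → 𝕜) (t : ℝ) :
    ∀ w : X, (∀ n ∈ E, ‖c n‖ ≤ t) →
      ∃ ε : ℕ → 𝕜, (∀ n, ‖ε n‖ = 1) ∧
        ‖w + ∑ n ∈ E, c n • B.e n‖ ≤ ‖w + ∑ n ∈ E, ((t : 𝕜) * ε n) • B.e n‖ := by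
  classical
  induction E using Finset.induction with
  | empty =>
    intro w _
    exact ⟨fun _ => 1, fun _ => norm_one, by simp⟩
  | @insert a E ha IH =>
    intro w hc
    obtain ⟨u, hu, hstep⟩ := signChoice (c a) t (hc a (Finset.mem_insert_self a E))
      (w + ∑ n ∈ E, c n • B.e n) (B.e a)
    obtain ⟨ε, hε, hIH⟩ := IH (w + ((t : 𝕜) * u) • B.e a)
      (fun n hn => hc n (Finset.mem_insert_of_mem hn))
    refine ⟨Function.update ε a u, ?_, ?_⟩
    · intro n
      rcases eq_or_ne n a with rfl | h
      · rw [Function.update_self]; exact hu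
      · rw [Function.update_of_ne h]; exact hε n
    · have hsum1 : ∑ n ∈ insert a E, c n • B.e n = c a • B.e a + ∑ n ∈ E, c n • B.e n :=
        Finset.sum_insert ha
      have hsum2 : ∑ n ∈ insert a E, ((t:𝕜) * Function.update ε a u n) • B.e n
          = ((t:𝕜) * u) • B.e a + ∑ n ∈ E, ((t:𝕜) * ε n) • B.e n := by
        rw [Finset.sum_insert ha, Function.update_self]
        congr 1
        refine Finset.sum_congr rfl fun n hn => ?_
        rw [Function.update_of_ne (by rintro rfl; exact ha hn)]
      rw [hsum1, hsum2]
      calc ‖w + (c a • B.e a + ∑ n ∈ E, c n • B.e n)‖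
          = ‖(w + ∑ n ∈ E, c n • B.e n) + c a • B.e a‖ := by
            rw [add_comm (c a • B.e a), ← add_assoc]
        _ ≤ ‖(w + ∑ n ∈ E, c n • B.e n) + ((t:𝕜) * u) • B.e a‖ := hstep
        _ = ‖(w + ((t:𝕜) * u) • B.e a) + ∑ n ∈ E, c n • B.e n‖ := by rw [add_right_comm]
        _ ≤ ‖(w + ((t:𝕜) * u) • B.e a) + ∑ n ∈ E, ((t:𝕜) * ε n) • B.e n‖ := hIH
        _ = ‖w + (((t:𝕜) * u) • B.e a + ∑ n ∈ E, ((t:𝕜) * ε n) • B.e n)‖ := by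
            rw [← add_assoc]

/-- Truncation lemma: a convex-coefficient modification of `y` on `Λ` is dominated by the
worst "up-set" projection bound. -/
lemma truncAux (B : BasisOf 𝕜 X) (y : X) (Cl : ℝ) :
    ∀ (Λ : Finset ℕ) (θ : ℕ → ℝ),
      (∀ n ∈ Λ, 0 ≤ θ n ∧ θ n ≤ 1) →
      (∀ U ⊆ Λ, (∀ u ∈ U, ∀ v ∈ Λ, v ∉ U → θ v ≤ θ u) → ‖y - B.proj U y‖ ≤ Cl * ‖y‖) →
      ‖y - ∑ n ∈ Λ, ((θ n : 𝕜) * B.coord n y) • B.e n‖ ≤ Cl * ‖y‖ := by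
  classical
  intro Λ
  induction Λ using Finset.strongInduction with
  | _ Λ IH =>
    intro θ hθ hU
    rcases Finset.eq_empty_or_nonempty Λ with rfl | hne
    · have h := hU ∅ (Finset.empty_subset _) (by simp)
      simpa [proj] using h
    · obtain ⟨n₀, hn₀, hmin⟩ := Finset.exists_min_image Λ θ hne
      set cmin := θ n₀ with hcmin
      have hc0 : 0 ≤ cmin := (hθ n₀ hn₀).1
      have hc1 : cmin ≤ 1 := (hθ n₀ hn₀).2
      have hUΛ : ‖y - B.proj Λ y‖ ≤ Cl * ‖y‖ :=
        hU Λ (le_refl _) (fun u hu v hv hv' => absurd hv hv')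
      rcases eq_or_lt_of_le hc1 with hceq | hclt
      · have hall : ∀ n ∈ Λ, θ n = 1 := fun n hn =>
          le_antisymm (hθ n hn).2 (by rw [← hceq]; exact hmin n hn)
        have heq : ∑ n ∈ Λ, ((θ n : 𝕜) * B.coord n y) • B.e n = B.proj Λ y := by
          unfold proj
          refine Finset.sum_congr rfl fun n hn => ?_
          rw [hall n hn]
          norm_num
        rw [heq]; exact hUΛ
      · set Λ' := Λ.filter (fun n => cmin < θ n) with hΛ'
        have hssub : Λ' ⊆ Λ := Finset.filter_subset _ _
        have hss : Λ' ⊂ Λ := by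
          refine (Finset.ssubset_iff_of_subset hssub).mpr ⟨n₀, hn₀, ?_⟩
          simp [hΛ', hcmin]
        set θ' : ℕ → ℝ := fun n => (θ n - cmin) / (1 - cmin) with hθ'
        have h1c : 0 < 1 - cmin := by linarith
        have hrec : ∀ n, θ n = cmin + (1 - cmin) * θ' n := by
          intro n
          rw [hθ']
          field_simp
          ring
        have hθ'mem : ∀ n ∈ Λ', 0 ≤ θ' n ∧ θ' n ≤ 1 := by
          intro n hn
          rw [hΛ', Finset.mem_filter] at hn
          constructor
          · apply div_nonneg _ h1c.le; linarith [hn.2]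
          · rw [hθ', div_le_one h1c]; linarith [(hθ n hn.1).2]
        have hU' : ∀ U ⊆ Λ', (∀ u ∈ U, ∀ v ∈ Λ', v ∉ U → θ' v ≤ θ' u) →
            ‖y - B.proj U y‖ ≤ Cl * ‖y‖ := by
          intro U hUss hup
          refine hU U (hUss.trans hssub) ?_
          intro u hu v hv hvU
          by_cases hvΛ' : v ∈ Λ'
          · have h := hup u hu v hvΛ' hvU
            have := mul_le_mul_of_nonneg_right h h1c.le
            rw [hrec v, hrec u]
            linarith
          · have hvle : θ v ≤ cmin := by
              by_contra hcon
              exact hvΛ' (by rw [hΛ', Finset.mem_filter]; exact ⟨hv, by linarith⟩)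
            exact le_trans hvle (hmin u (hssub (hUss hu)))
        have hext : ∑ n ∈ Λ, ((θ' n : 𝕜) * B.coord n y) • B.e n
            = ∑ n ∈ Λ', ((θ' n : 𝕜) * B.coord n y) • B.e n := by
          refine (Finset.sum_subset hssub fun n hn hn' => ?_).symm
          have htn : θ n = cmin := le_antisymm (by
            by_contra hcon
            exact hn' (by rw [hΛ', Finset.mem_filter]; exact ⟨hn, by linarith⟩)) (hmin n hn)
          have hz : θ' n = 0 := by
            show (θ n - cmin) / (1 - cmin) = 0
            rw [htn]
            simp
          rw [hz]
          norm_num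
        have hIH := IH Λ' hss θ' hθ'mem hU'
        rw [← hext] at hIH
        have hcd : ((cmin : ℝ) : 𝕜) + ((1 - cmin : ℝ) : 𝕜) = 1 := by push_cast; ring
        have hterm : ∀ n ∈ Λ, ((θ n : 𝕜) * B.coord n y) • B.e n
            = ((cmin : ℝ) : 𝕜) • (B.coord n y • B.e n)
              + ((1 - cmin : ℝ) : 𝕜) • (((θ' n : 𝕜) * B.coord n y) • B.e n) := by
          intro n _
          rw [smul_smul, smul_smul, ← add_smul]
          congr 1
          have : ((θ n : ℝ) : 𝕜) = ((cmin : ℝ) : 𝕜) + ((1 - cmin : ℝ) : 𝕜) * (θ' n : 𝕜) := by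
            rw [hrec n]; push_cast; ring
          rw [this]; ring
        have hkey : y - ∑ n ∈ Λ, ((θ n : 𝕜) * B.coord n y) • B.e n
            = ((cmin : ℝ) : 𝕜) • (y - B.proj Λ y)
              + ((1 - cmin : ℝ) : 𝕜) • (y - ∑ n ∈ Λ, ((θ' n : 𝕜) * B.coord n y) • B.e n) := by
          rw [Finset.sum_congr rfl hterm, Finset.sum_add_distrib,
            ← Finset.smul_sum, ← Finset.smul_sum]
          unfold proj
          rw [smul_sub, smul_sub]
          rw [show ((cmin : ℝ) : 𝕜) • y - ((cmin : ℝ) : 𝕜) • ∑ n ∈ Λ, B.coord n y • B.e n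
              + (((1 - cmin : ℝ) : 𝕜) • y
                - ((1 - cmin : ℝ) : 𝕜) • ∑ n ∈ Λ, ((θ' n : 𝕜) * B.coord n y) • B.e n)
              = (((cmin : ℝ) : 𝕜) • y + ((1 - cmin : ℝ) : 𝕜) • y)
                - (((cmin : ℝ) : 𝕜) • ∑ n ∈ Λ, B.coord n y • B.e n
                  + ((1 - cmin : ℝ) : 𝕜) • ∑ n ∈ Λ, ((θ' n : 𝕜) * B.coord n y) • B.e n)
            from by abel]
          rw [← add_smul, hcd, one_smul]
        rw [hkey]
        have hn1 : ‖((cmin : ℝ) : 𝕜) • (y - B.proj Λ y)‖ = cmin * ‖y - B.proj Λ y‖ := by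
          rw [norm_smul, RCLike.norm_ofReal, abs_of_nonneg hc0]
        have hn2 : ‖((1 - cmin : ℝ) : 𝕜)
            • (y - ∑ n ∈ Λ, ((θ' n : 𝕜) * B.coord n y) • B.e n)‖
            = (1 - cmin) * ‖y - ∑ n ∈ Λ, ((θ' n : 𝕜) * B.coord n y) • B.e n‖ := by
          rw [norm_smul, RCLike.norm_ofReal, abs_of_nonneg h1c.le]
        refine le_trans (norm_add_le _ _) ?_
        rw [hn1, hn2]
        nlinarith [hUΛ, hIH, hc0, h1c, norm_nonneg (y - B.proj Λ y),
          norm_nonneg (y - ∑ n ∈ Λ, ((θ' n : 𝕜) * B.coord n y) • B.e n)]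

end BasisOf

end AuxSPG

/-- A `C_ℓ`-suppression quasi-greedy, `Δ`-(𝐧, PSLC) basis is
(𝐧, strong partially greedy) with constant `C_ℓ·Δ`. -/
theorem statement2 {𝕜 X : Type*} [RCLike 𝕜] [NormedAddCommGroup X] [NormedSpace 𝕜 X]
    [CompleteSpace X] (B : BasisOf 𝕜 X) (seq : ℕ → ℕ) (hseq : StrictMono seq)
    (Cl Δ : ℝ) (h1 : B.SuppQGWith Cl) (h2 : B.PSLCWith seq Δ) :
    B.SPGWith seq (Cl * Δ) := by
  classical
  intro x m hm A hAcard hA k hk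
  have hΔ1 : 1 ≤ Δ := B.pslc_one_le seq Δ h2
  have hCl1 : 1 ≤ Cl := B.suppqg_one_le Cl h1
  have hAne : A.Nonempty := Finset.card_pos.mp (by omega)
  have hCD : 1 ≤ Cl * Δ :=
    le_trans hCl1 (by nlinarith [mul_le_mul_of_nonneg_left hΔ1 (show (0:ℝ) ≤ Cl by linarith)])
  obtain ⟨a₀, ha₀, hminA⟩ := Finset.exists_min_image A (fun a => ‖B.coord a x‖) hAne
  set t := ‖B.coord a₀ x‖ with htdef
  have ht0 : 0 ≤ t := norm_nonneg _
  have hout : ∀ b, b ∉ A → ‖B.coord b x‖ ≤ t := fun b hb => hA a₀ ha₀ b hb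
  set S := (Finset.range k).image seq with hSdef
  have hSsub : ∀ n ∈ S, n ∈ Set.range seq := by
    intro n hn
    obtain ⟨i, _, rfl⟩ := Finset.mem_image.mp hn
    exact ⟨i, rfl⟩
  have hSmem : ∀ j, j ∈ Set.range seq → j ∉ S → ∀ i, i < k → seq i < j := by
    intro j hj hjS i hi
    obtain ⟨l, rfl⟩ := hj
    have hlk : k ≤ l := by
      by_contra hcon
      exact hjS (Finset.mem_image.mpr ⟨l, Finset.mem_range.mpr (by omega), rfl⟩)
    exact hseq (lt_of_lt_of_le hi hlk)
  have hprojSeq : B.projSeq seq k x = B.proj S x := by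
    unfold BasisOf.projSeq BasisOf.proj
    rw [hSdef, Finset.sum_image (fun i _ j _ hij => hseq.injective hij)]
  set y := x - B.proj S x with hydef
  rw [hprojSeq, ← hydef]
  have hyc : ∀ n, B.coord n y = if n ∈ S then 0 else B.coord n x := by
    intro n
    rw [hydef, map_sub, B.coord_proj]
    split_ifs <;> simp
  set z := x - B.proj (A ∪ S) x with hzdef
  have hzc : ∀ n, B.coord n z = if n ∈ A ∪ S then 0 else B.coord n x := by
    intro n
    rw [hzdef, map_sub, B.coord_proj]
    split_ifs <;> simp
  have hzt : ∀ n, ‖B.coord n z‖ ≤ t := by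
    intro n
    rw [hzc n]
    split_ifs with h
    · simpa using ht0
    · exact hout n (fun hn => h (Finset.mem_union_left _ hn))
  have hsplit : B.proj (A ∪ S) x = B.proj A x + B.proj (S \ A) x := by
    unfold BasisOf.proj
    rw [← Finset.sum_union Finset.disjoint_sdiff, Finset.union_sdiff_self_eq_union]
  have hI1 : x - B.proj A x = z + B.proj (S \ A) x := by
    rw [hzdef, hsplit]; abel
  have hsplit2 : B.proj (A ∪ S) x = B.proj S x + B.proj (A \ S) x := by
    unfold BasisOf.proj
    rw [show A ∪ S = S ∪ (A \ S) from by
        rw [Finset.union_sdiff_self_eq_union, Finset.union_comm],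
      Finset.sum_union Finset.disjoint_sdiff]
  have hprojAS : B.proj (A \ S) y = B.proj (A \ S) x := by
    unfold BasisOf.proj
    refine Finset.sum_congr rfl fun n hn => ?_
    rw [hyc n, if_neg (Finset.mem_sdiff.mp hn).2]
  have hzy : z = y - B.proj (A \ S) y := by
    rw [hprojAS, hydef, hzdef, hsplit2]; abel
  by_cases htz : t = 0
  · have hcx : ∀ b, b ∉ A → B.coord b x = 0 := fun b hb =>
      norm_le_zero_iff.mp (htz ▸ hout b hb)
    have hE0 : B.proj (S \ A) x = 0 := by
      unfold BasisOf.proj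
      refine Finset.sum_eq_zero fun n hn => ?_
      rw [hcx n (Finset.mem_sdiff.mp hn).2, zero_smul]
    rw [hI1, hE0, add_zero, hzy]
    rcases Finset.eq_empty_or_nonempty (A \ S) with hΛe | hΛne
    · rw [hΛe]
      have hp0 : B.proj ∅ y = 0 := by simp [BasisOf.proj]
      rw [hp0, sub_zero]
      nlinarith [mul_le_mul_of_nonneg_right hCD (norm_nonneg y)]
    · have hgr : B.IsGreedySet y (A \ S) := by
        intro u hu b hb
        rw [hyc b]
        split_ifs with hbS
        · simp
        · have hbA : b ∉ A := fun hbA => hb (Finset.mem_sdiff.mpr ⟨hbA, hbS⟩)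
          rw [hcx b hbA]
          simp
      calc ‖y - B.proj (A \ S) y‖ ≤ Cl * ‖y‖ := h1 y (A \ S) hΛne hgr
        _ ≤ Cl * Δ * ‖y‖ := by
            nlinarith [mul_le_mul_of_nonneg_right hΔ1
              (mul_nonneg (show (0:ℝ) ≤ Cl by linarith) (norm_nonneg y))]
  · have htpos : 0 < t := lt_of_le_of_ne ht0 (Ne.symm htz)
    obtain ⟨ε, hε, hconv⟩ := B.convChoice (S \ A) (fun n => B.coord n x) t z
      (fun n hn => hout n (Finset.mem_sdiff.mp hn).2)
    obtain ⟨δ, hδ, hδval⟩ : ∃ δ : ℕ → 𝕜, (∀ n, ‖δ n‖ = 1) ∧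
        ∀ n, B.coord n x ≠ 0 → δ n = (‖B.coord n x‖ : 𝕜)⁻¹ * B.coord n x := by
      refine ⟨fun n => if h : B.coord n x = 0 then 1
        else (‖B.coord n x‖ : 𝕜)⁻¹ * B.coord n x, ?_, ?_⟩
      · intro n
        dsimp only
        split_ifs with h
        · exact norm_one
        · rw [norm_mul, norm_inv, RCLike.norm_ofReal, abs_of_nonneg (norm_nonneg _)]
          exact inv_mul_cancel₀ (norm_ne_zero_iff.mpr h)
      · intro n h
        dsimp only
        rw [dif_neg h]
    set x' : X := ((t⁻¹ : ℝ) : 𝕜) • z with hx'def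
    have hx'c : ∀ n, B.coord n x' = ((t⁻¹ : ℝ) : 𝕜) * B.coord n z := by
      intro n
      rw [hx'def, map_smul, smul_eq_mul]
    have hcoords : ∀ n, ‖B.coord n x'‖ ≤ 1 := by
      intro n
      rw [hx'c n, norm_mul, RCLike.norm_ofReal, abs_of_nonneg (inv_nonneg.mpr ht0)]
      rw [← inv_mul_cancel₀ (ne_of_gt htpos)]
      exact mul_le_mul_of_nonneg_left (hzt n) (inv_nonneg.mpr ht0)
    have hScard : S.card = k := by
      rw [hSdef, Finset.card_image_of_injective _ hseq.injective, Finset.card_range]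
    have hcard2 : (S \ A).card ≤ (A \ S).card := by
      have e1 := Finset.card_sdiff_add_card_inter S A
      have e2 := Finset.card_sdiff_add_card_inter A S
      have e3 : (S ∩ A).card = (A ∩ S).card := by rw [Finset.inter_comm]
      omega
    have htpair : TPair seq (S \ A) (A \ S) := by
      refine ⟨?_, hcard2, ?_⟩
      · intro n hn
        exact hSsub n (Finset.mem_sdiff.mp (Finset.mem_coe.mp hn)).1
      · intro a ha d hd hdr
        obtain ⟨i, hik, rfl⟩ := Finset.mem_image.mp (Finset.mem_sdiff.mp ha).1
        exact hSmem d hdr (Finset.mem_sdiff.mp hd).2 i (Finset.mem_range.mp hik)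
    have hD : ∀ d ∈ A \ S, B.coord d x' = 0 := by
      intro d hd
      rw [hx'c d, hzc d, if_pos (Finset.mem_union_left _ (Finset.mem_sdiff.mp hd).1), mul_zero]
    have horder : ∀ a ∈ S \ A, ∀ j : ℕ, (j ∈ A \ S ∨ B.coord j x' ≠ 0) →
        j ∈ Set.range seq → a < j := by
      intro a ha j hj hjr
      obtain ⟨i, hik, rfl⟩ := Finset.mem_image.mp (Finset.mem_sdiff.mp ha).1
      rcases hj with hjD | hjc
      · exact hSmem j hjr (Finset.mem_sdiff.mp hjD).2 i (Finset.mem_range.mp hik)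
      · have hjz : B.coord j z ≠ 0 := by
          intro h0
          exact hjc (by rw [hx'c, h0, mul_zero])
        have hjAS : j ∉ A ∪ S := by
          intro h
          exact hjz (by rw [hzc, if_pos h])
        exact hSmem j hjr (fun hjS => hjAS (Finset.mem_union_right _ hjS)) i
          (Finset.mem_range.mp hik)
    have hPSLC := h2 x' hcoords (S \ A) (A \ S) htpair hD horder ε δ hε hδ
    have hscale : ∀ (γ : ℕ → 𝕜) (F : Finset ℕ),
        ((t : ℝ) : 𝕜) • (x' + B.sgnSum γ F) = z + ∑ n ∈ F, ((t : 𝕜) * γ n) • B.e n := by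
      intro γ F
      rw [smul_add, hx'def, smul_smul]
      rw [show ((t : ℝ) : 𝕜) * ((t⁻¹ : ℝ) : 𝕜) = 1 from by
        rw [← RCLike.ofReal_mul, mul_inv_cancel₀ (ne_of_gt htpos), RCLike.ofReal_one]]
      rw [one_smul]
      congr 1
      unfold BasisOf.sgnSum
      rw [Finset.smul_sum]
      exact Finset.sum_congr rfl fun n _ => by rw [smul_smul]
    have hnorm_scale : ∀ (γ : ℕ → 𝕜) (F : Finset ℕ),
        ‖z + ∑ n ∈ F, ((t : 𝕜) * γ n) • B.e n‖ = t * ‖x' + B.sgnSum γ F‖ := by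
      intro γ F
      rw [← hscale, norm_smul, RCLike.norm_ofReal, abs_of_nonneg ht0]
    set θ : ℕ → ℝ := fun n => 1 - t / ‖B.coord n x‖ with hθdef
    have hΛx : ∀ n ∈ A \ S, t ≤ ‖B.coord n x‖ := fun n hn =>
      hminA n (Finset.mem_sdiff.mp hn).1
    have hΛx0 : ∀ n ∈ A \ S, B.coord n x ≠ 0 := fun n hn =>
      norm_ne_zero_iff.mp (ne_of_gt (lt_of_lt_of_le htpos (hΛx n hn)))
    have hθmem : ∀ n ∈ A \ S, 0 ≤ θ n ∧ θ n ≤ 1 := by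
      intro n hn
      have h := hΛx n hn
      have hpos := lt_of_lt_of_le htpos h
      constructor
      · show 0 ≤ 1 - t / ‖B.coord n x‖
        have := (div_le_one hpos).mpr h
        linarith
      · show 1 - t / ‖B.coord n x‖ ≤ 1
        have := div_nonneg ht0 hpos.le
        linarith
    have hident : z + ∑ n ∈ A \ S, ((t : 𝕜) * δ n) • B.e n
        = y - ∑ n ∈ A \ S, ((θ n : 𝕜) * B.coord n y) • B.e n := by
      rw [hzy]
      unfold BasisOf.proj
      rw [sub_add, ← Finset.sum_sub_distrib]
      congr 1
      refine Finset.sum_congr rfl fun n hn => ?_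
      rw [← sub_smul]
      congr 1
      have hcy : B.coord n y = B.coord n x := by
        rw [hyc n, if_neg (Finset.mem_sdiff.mp hn).2]
      rw [hcy, hδval n (hΛx0 n hn)]
      have hne : (‖B.coord n x‖ : 𝕜) ≠ 0 := by
        rw [Ne, RCLike.ofReal_eq_zero]
        exact norm_ne_zero_iff.mpr (hΛx0 n hn)
      show B.coord n x - (t : 𝕜) * ((‖B.coord n x‖ : 𝕜)⁻¹ * B.coord n x)
          = ((1 - t / ‖B.coord n x‖ : ℝ) : 𝕜) * B.coord n x
      push_cast
      field_simp
    have hup : ∀ U ⊆ A \ S, (∀ u ∈ U, ∀ v ∈ A \ S, v ∉ U → θ v ≤ θ u) →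
        ‖y - B.proj U y‖ ≤ Cl * ‖y‖ := by
      intro U hUs hupset
      rcases Finset.eq_empty_or_nonempty U with rfl | hUne
      · have hp0 : B.proj ∅ y = 0 := by simp [BasisOf.proj]
        rw [hp0, sub_zero]
        nlinarith [mul_le_mul_of_nonneg_right hCl1 (norm_nonneg y)]
      · refine h1 y U hUne ?_
        intro u hu b hb
        have huA : u ∈ A \ S := hUs hu
        have hcu : B.coord u y = B.coord u x := by
          rw [hyc u, if_neg (Finset.mem_sdiff.mp huA).2]
        have hcu_ge : t ≤ ‖B.coord u y‖ := by
          rw [hcu]; exact hΛx u huA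
        rw [hyc b]
        split_ifs with hbS
        · simp
        · by_cases hbΛ : b ∈ A \ S
          · have hθb : (1 : ℝ) - t / ‖B.coord b x‖ ≤ 1 - t / ‖B.coord u x‖ :=
              hupset u hu b hbΛ hb
            have hbpos := lt_of_lt_of_le htpos (hΛx b hbΛ)
            have hupos := lt_of_lt_of_le htpos (hΛx u huA)
            have hdiv : t / ‖B.coord u x‖ ≤ t / ‖B.coord b x‖ := by linarith
            rw [hcu]
            rw [div_le_div_iff₀ hupos hbpos] at hdiv
            exact le_of_mul_le_mul_left (by linarith) htpos
          · have hbA : b ∉ A := fun hbA => hbΛ (Finset.mem_sdiff.mpr ⟨hbA, hbS⟩)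
            exact le_trans (hout b hbA) hcu_ge
    have htrunc := B.truncAux y Cl (A \ S) θ hθmem hup
    rw [← hident] at htrunc
    calc ‖x - B.proj A x‖ = ‖z + B.proj (S \ A) x‖ := by rw [hI1]
      _ ≤ ‖z + ∑ n ∈ S \ A, ((t : 𝕜) * ε n) • B.e n‖ := hconv
      _ = t * ‖x' + B.sgnSum ε (S \ A)‖ := hnorm_scale ε (S \ A)
      _ ≤ t * (Δ * ‖x' + B.sgnSum δ (A \ S)‖) := mul_le_mul_of_nonneg_left hPSLC ht0
      _ = Δ * (t * ‖x' + B.sgnSum δ (A \ S)‖) := by ring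
      _ = Δ * ‖z + ∑ n ∈ A \ S, ((t : 𝕜) * δ n) • B.e n‖ := by rw [hnorm_scale δ (A \ S)]
      _ ≤ Δ * (Cl * ‖y‖) := mul_le_mul_of_nonneg_left htrunc (by linarith)
      _ = Cl * Δ * ‖y‖ := by ring
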